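/- If LP^MLN programs 𝔽 and 𝔾 over 𝒫 are strongly equivalent, then they are structurally equivalent. -/

import Mathlib

namespace LPMLN

/-- Propositional formulas over a set of atoms `P`, built from atoms and `⊥`
using `∧`, `∨`, `→`. -/
inductive Formula (P : Type) : Type where
  | atom : P → Formula P
  | bot  : Formula P
  | and  : Formula P → Formula P → Formula P
  | or   : Formula P → Formula P → Formula P
  | imp  : Formula P → Formula P → Formula P
deriving DecidableEq

variable {P : Type} [DecidableEq P]

/-- `¬F` abbreviates `F → ⊥`. -/
def Formula.neg (F : Formula P) : Formula P := .imp F .bot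

/-- Classical evaluation of a formula in an interpretation `X ⊆ P`. -/
def Formula.eval (X : Finset P) : Formula P → Bool
  | .atom p => decide (p ∈ X)
  | .bot => false
  | .and F G => F.eval X && G.eval X
  | .or F G => F.eval X || G.eval X
  | .imp F G => !(F.eval X) || G.eval X

/-- Classical satisfaction `X ⊨ F`. -/
def Formula.sat (X : Finset P) (F : Formula P) : Prop := F.eval X = true

/-- The reduct `F^X`: every maximal subformula not satisfied by `X` is replaced by `⊥`. -/
def Formula.reduct (X : Finset P) : Formula P → Formula P
  | .atom p => if p ∈ X then .atom p else .bot
  | .bot => .bot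
  | .and F G => if (Formula.and F G).eval X then .and (F.reduct X) (G.reduct X) else .bot
  | .or F G => if (Formula.or F G).eval X then .or (F.reduct X) (G.reduct X) else .bot
  | .imp F G => if (Formula.imp F G).eval X then .imp (F.reduct X) (G.reduct X) else .bot

/-- `X` satisfies a (finite) set of formulas. -/
def satSet (X : Finset P) (Γ : Finset (Formula P)) : Prop := ∀ F ∈ Γ, F.sat X

/-- The reduct `Γ^X` of a finite set of formulas. -/
def reductSet (X : Finset P) (Γ : Finset (Formula P)) : Finset (Formula P) :=
  Γ.image (Formula.reduct X)

/-- `X` is a stable model of `Γ` if `X ⊨ Γ^X` and no proper subset of `X` satisfies `Γ^X`. -/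
def StableModel (Γ : Finset (Formula P)) (X : Finset P) : Prop :=
  satSet X (reductSet X Γ) ∧ ∀ Y, Y ⊂ X → ¬ satSet Y (reductSet X Γ)

/-- A weight is a real number (soft) or the symbol `α` (hard). -/
inductive Weight : Type where
  | soft : ℝ → Weight
  | hard : Weight

noncomputable instance : DecidableEq Weight := Classical.decEq _

/-- An LP^MLN program: a finite set of weighted formulas `w : R`. -/
abbrev Program (P : Type) [DecidableEq P] := Finset (Weight × Formula P)

/-- `𝔽_X`: the weighted formulas of `𝔽` whose formula is satisfied by `X`. -/
noncomputable def progSat (𝔽 : Program P) (X : Finset P) : Program P :=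
  𝔽.filter (fun r => r.2.eval X = true)

/-- `𝔽̄`: the formulas of `𝔽`, with weights dropped. -/
noncomputable def formulas (𝔽 : Program P) : Finset (Formula P) := 𝔽.image Prod.snd

/-- `X` is a soft stable model of `𝔽` (i.e. `X ∈ SM[𝔽]`) if `X` is a stable model of `𝔽̄_X`. -/
def SoftStable (𝔽 : Program P) (X : Finset P) : Prop :=
  StableModel (formulas (progSat 𝔽 X)) X

/-- w-expressions: either zero or a formal expression `e^{c₁ + c₂·α}` with `c₁ : ℝ`, `c₂ : ℤ`. -/
inductive WExpr : Type where
  | zero : WExpr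
  | exp : ℝ → ℤ → WExpr

/-- Multiplication of w-expressions: add exponents componentwise; zero is absorbing. -/
def WExpr.mul : WExpr → WExpr → WExpr
  | .zero, _ => .zero
  | _, .zero => .zero
  | .exp a b, .exp c d => .exp (a + c) (b + d)

/-- Inverse of a w-expression: negate both exponents. -/
def WExpr.inv : WExpr → WExpr
  | .zero => .zero
  | .exp a b => .exp (-a) (-b)

/-- Evaluation of a w-expression at a real number `a`. -/
noncomputable def WExpr.eval (a : ℝ) : WExpr → ℝ
  | .zero => 0
  | .exp c₁ c₂ => Real.exp (c₁ + c₂ * a)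

/-- The real contribution of a weight (hard rules contribute `0` to the soft sum). -/
def softWeight : Weight → ℝ
  | .soft r => r
  | .hard => 0

/-- Sum of the weights of the soft rules of `𝔽`. -/
noncomputable def softSum (𝔽 : Program P) : ℝ := ∑ r ∈ 𝔽, softWeight r.1

/-- The number of hard rules of `𝔽`. -/
noncomputable def hardCount (𝔽 : Program P) : ℤ :=
  ((𝔽.filter (fun r => r.1 = Weight.hard)).card : ℤ)

/-- `TW(𝔽) = e^{c₁ + c₂·α}` where `c₁` is the sum of the soft weights and
`c₂` the number of hard rules. -/
noncomputable def TW (𝔽 : Program P) : WExpr := .exp (softSum 𝔽) (hardCount 𝔽)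

open Classical in
/-- `W_𝔽(X) = TW(𝔽_X)` if `X ∈ SM[𝔽]`, and zero otherwise. -/
noncomputable def W (𝔽 : Program P) (X : Finset P) : WExpr :=
  if SoftStable 𝔽 X then TW (progSat 𝔽 X) else .zero

open Classical in
/-- `W^pnt_𝔽(X) = TW(𝔽 \ 𝔽_X)⁻¹` if `X ∈ SM[𝔽]`, and zero otherwise. -/
noncomputable def Wpnt (𝔽 : Program P) (X : Finset P) : WExpr :=
  if SoftStable 𝔽 X then (TW (𝔽 \ progSat 𝔽 X)).inv else .zero

/-- `P_𝔽(X)`: the limit as `a → ∞` of the normalized evaluation of `W_𝔽(X)`. -/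
noncomputable def Pr [Fintype P] (𝔽 : Program P) (X : Finset P) : ℝ :=
  Filter.limUnder Filter.atTop
    (fun a : ℝ => (W 𝔽 X).eval a / ∑ Y : Finset P, (W 𝔽 Y).eval a)

/-- `P^pnt_𝔽(X)`: the limit as `a → ∞` of the normalized evaluation of `W^pnt_𝔽(X)`. -/
noncomputable def PrPnt [Fintype P] (𝔽 : Program P) (X : Finset P) : ℝ :=
  Filter.limUnder Filter.atTop
    (fun a : ℝ => (Wpnt 𝔽 X).eval a / ∑ Y : Finset P, (Wpnt 𝔽 Y).eval a)

/-- Weak equivalence: the same probability distribution. -/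
def WeakEquiv [Fintype P] (𝔽 𝔾 : Program P) : Prop :=
  ∀ X : Finset P, Pr 𝔽 X = Pr 𝔾 X

/-- Strong equivalence of LP^MLN programs. -/
def StrongEquiv [Fintype P] (𝔽 𝔾 : Program P) : Prop :=
  ∀ (ℍ : Program P) (X : Finset P), Pr (𝔽 ∪ ℍ) X = Pr (𝔾 ∪ ℍ) X

/-- Structural equivalence of LP^MLN programs. -/
def StructEquiv (𝔽 𝔾 : Program P) : Prop :=
  ∀ (ℍ : Program P) (X : Finset P), SoftStable (𝔽 ∪ ℍ) X ↔ SoftStable (𝔾 ∪ ℍ) X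

/-- HT satisfaction `⟨Y,X⟩ ⊨ₕₜ F` (at the world "here"). -/
def htSat (Y X : Finset P) : Formula P → Prop
  | .atom p => p ∈ Y
  | .bot => False
  | .and F G => htSat Y X F ∧ htSat Y X G
  | .or F G => htSat Y X F ∨ htSat Y X G
  | .imp F G => (htSat Y X F → htSat Y X G) ∧ (Formula.imp F G).sat X

/-- `⟨Y,X⟩` is an HT model of a set `Γ` of formulas. -/
def HTModel (Γ : Finset (Formula P)) (Y X : Finset P) : Prop :=
  Y ⊆ X ∧ ∀ F ∈ Γ, htSat Y X F

/-- `⟨Y,X⟩` is a soft HT model of an LP^MLN program `𝔽`. -/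
def SoftHT (𝔽 : Program P) (Y X : Finset P) : Prop :=
  Y ⊆ X ∧ ∀ r ∈ progSat 𝔽 X, htSat Y X r.2

/-- The choice formula `{F}^ch = F ∨ ¬F`. -/
def Formula.ch (F : Formula P) : Formula P := .or F F.neg

/-- `{Γ}^ch`, choice formulas of a set of formulas. -/
def chSet (Γ : Finset (Formula P)) : Finset (Formula P) := Γ.image Formula.ch

/-- Renaming of atoms. -/
def Formula.rename {Q : Type} (f : P → Q) : Formula P → Formula Q
  | .atom p => .atom (f p)
  | .bot => .bot
  | .and F G => .and (F.rename f) (G.rename f)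
  | .or F G => .or (F.rename f) (G.rename f)
  | .imp F G => .imp (F.rename f) (G.rename f)

/-- `Δ_{𝒫'}(F)`, a formula over `𝒫 ∪ 𝒫'`; unprimed atoms are `Sum.inl p`,
primed atoms `p'` are `Sum.inr p`. -/
def Formula.delta : Formula P → Formula (P ⊕ P)
  | .atom p => .atom (Sum.inr p)
  | .bot => .bot
  | .and F G => .and F.delta G.delta
  | .or F G => .or F.delta G.delta
  | .imp F G => .and (.imp F.delta G.delta)
      (.imp (F.rename Sum.inl) (G.rename Sum.inl))

/-- `Δ_{𝒫'}(Γ)` for a set of formulas. -/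
def deltaSet (Γ : Finset (Formula P)) : Finset (Formula (P ⊕ P)) :=
  Γ.image Formula.delta

/-- The interpretation `Y' ∪ X` of `𝒫 ∪ 𝒫'`. -/
def primedInterp (Y X : Finset P) : Finset (P ⊕ P) :=
  X.image Sum.inl ∪ Y.image Sum.inr


/-! ### Auxiliary machinery for stmt4 -/

section Stmt4Aux

open Filter

/-- `⊤` -/
def ftop : Formula P := .imp .bot .bot

/-- The pin formula for atom `p` relative to `X`: `¬¬p` if `p ∈ X`, `¬p` otherwise. -/
def pinF (X : Finset P) (p : P) : Formula P :=
  if p ∈ X then .imp (.imp (.atom p) .bot) .bot else .imp (.atom p) .bot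

/-- Padding a formula with conjunctions of `⊤` to create distinct copies. -/
def pad : ℕ → Formula P → Formula P
  | 0, F => F
  | k+1, F => .and ftop (pad k F)

lemma eval_ftop (Y : Finset P) : (ftop (P := P)).eval Y = true := rfl

lemma eval_pad (k : ℕ) (F : Formula P) (Y : Finset P) :
    (pad k F).eval Y = F.eval Y := by
  induction k with
  | zero => rfl
  | succ k ih => simp [pad, Formula.eval, ih, eval_ftop]

lemma eval_pinF (X : Finset P) (p : P) (Y : Finset P) :
    (pinF X p).eval Y = true ↔ ((p ∈ X) ↔ (p ∈ Y)) := by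
  by_cases hp : p ∈ X <;> by_cases hy : p ∈ Y <;>
    simp [pinF, hp, hy, Formula.eval]

lemma reduct_ftop (Y Z : Finset P) : ((ftop (P := P)).reduct Y).eval Z = true := by
  simp [ftop, Formula.reduct, Formula.eval]

lemma reduct_pinF {X : Finset P} {p : P} {Y : Finset P}
    (h : (pinF X p).eval Y = true) (Z : Finset P) :
    ((pinF X p).reduct Y).eval Z = true := by
  by_cases hp : p ∈ X
  · have hy : p ∈ Y := ((eval_pinF X p Y).1 h).1 hp
    simp [pinF, hp, Formula.reduct, Formula.eval, hy]
  · have hy : p ∉ Y := fun hc => hp (((eval_pinF X p Y).1 h).2 hc)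
    simp [pinF, hp, Formula.reduct, Formula.eval, hy]

lemma reduct_pad {F : Formula P} {Y : Finset P} (k : ℕ)
    (hF : F.eval Y = true) (hFr : ∀ Z, (F.reduct Y).eval Z = true) (Z : Finset P) :
    ((pad k F).reduct Y).eval Z = true := by
  induction k with
  | zero => exact hFr Z
  | succ k ih =>
      have hev : (pad (k+1) F).eval Y = true := by rw [eval_pad]; exact hF
      simp only [pad, Formula.reduct] at *
      rw [if_pos hev]
      simp [Formula.eval, ih, reduct_ftop]

lemma pinF_ne_and (X : Finset P) (p : P) (A B : Formula P) :
    pinF X p ≠ .and A B := by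
  by_cases hp : p ∈ X <;> simp [pinF, hp]

lemma pad_pinF_inj (X : Finset P) (p : P) :
    Function.Injective (fun k => pad k (pinF X p)) := by
  intro k j hkj
  simp only at hkj
  induction k generalizing j with
  | zero =>
      cases j with
      | zero => rfl
      | succ j =>
          simp only [pad] at hkj
          exact absurd hkj (pinF_ne_and X p ftop (pad j (pinF X p)))
  | succ k ih =>
      cases j with
      | zero =>
          simp only [pad] at hkj
          exact absurd hkj.symm (pinF_ne_and X p ftop (pad k (pinF X p)))
      | succ j =>
          simp only [pad, Formula.and.injEq] at hkj
          exact congrArg Nat.succ (ih hkj.2)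

/-- `N` distinct hard pin rules for atom `p`. -/
noncomputable def pinP (X : Finset P) (p : P) (N : ℕ) : Program P :=
  (Finset.range N).image (fun k => (Weight.hard, pad k (pinF X p)))

/-- The pin program: `N` hard copies of the pin formula of each atom. -/
noncomputable def pin [Fintype P] (X : Finset P) (N : ℕ) : Program P :=
  Finset.univ.biUnion (fun p => pinP X p N)

lemma card_pinP (X : Finset P) (p : P) (N : ℕ) : (pinP X p N).card = N := by
  rw [pinP, Finset.card_image_of_injective _ (fun a b hab => by
    exact pad_pinF_inj X p (by injection hab))]
  exact Finset.card_range N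

lemma pinP_subset_pin [Fintype P] (X : Finset P) (p : P) (N : ℕ) :
    pinP X p N ⊆ pin X N :=
  Finset.subset_biUnion_of_mem (fun q => pinP X q N) (Finset.mem_univ p)

lemma mem_pin [Fintype P] {X : Finset P} {N : ℕ} {r : Weight × Formula P}
    (hr : r ∈ pin X N) :
    r.1 = Weight.hard ∧ ∃ p k, r.2 = pad k (pinF X p) := by
  simp only [pin, pinP, Finset.mem_biUnion, Finset.mem_image, Finset.mem_univ, true_and,
    Finset.mem_range] at hr
  obtain ⟨p, k, _, hk⟩ := hr
  exact ⟨by rw [← hk], p, k, by rw [← hk]⟩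

lemma pin_eval_X [Fintype P] {X : Finset P} {N : ℕ} {r : Weight × Formula P}
    (hr : r ∈ pin X N) : r.2.eval X = true := by
  obtain ⟨-, p, k, h2⟩ := mem_pin hr
  rw [h2, eval_pad, eval_pinF]

lemma pin_constraint [Fintype P] {X : Finset P} {N : ℕ} {r : Weight × Formula P}
    (hr : r ∈ pin X N) (Y : Finset P) (hY : r.2.eval Y = true) (Z : Finset P) :
    ((r.2.reduct Y).eval Z) = true := by
  obtain ⟨-, p, k, h2⟩ := mem_pin hr
  rw [h2] at hY ⊢
  rw [eval_pad] at hY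
  exact reduct_pad k hY (reduct_pinF hY) Z

/-- The key condition: `Z` satisfies the reduct relative to `Y` of the formulas of `𝕂`
satisfied by `Y`. -/
def cond (𝕂 : Program P) (Y Z : Finset P) : Prop :=
  ∀ r ∈ 𝕂, r.2.eval Y = true → ((r.2.reduct Y).eval Z = true)

lemma satSet_iff (𝕂 : Program P) (Y Z : Finset P) :
    satSet Z (reductSet Y (formulas (progSat 𝕂 Y))) ↔ cond 𝕂 Y Z := by
  unfold satSet reductSet formulas progSat cond Formula.sat
  simp only [Finset.forall_mem_image, Finset.mem_filter]
  exact ⟨fun h r hr he => h ⟨hr, he⟩, fun h ⦃r⦄ hr => h r hr.1 hr.2⟩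

lemma softStable_iff (𝕂 : Program P) (X : Finset P) :
    SoftStable 𝕂 X ↔ cond 𝕂 X X ∧ ∀ Y, Y ⊂ X → ¬ cond 𝕂 X Y := by
  unfold SoftStable StableModel
  rw [satSet_iff]
  refine and_congr Iff.rfl (forall_congr' fun Y => imp_congr Iff.rfl ?_)
  rw [satSet_iff]

lemma cond_union_pin [Fintype P] (A : Program P) (X : Finset P) (N : ℕ)
    (Y Z : Finset P) : cond (A ∪ pin X N) Y Z ↔ cond A Y Z := by
  constructor
  · intro h r hr he
    exact h r (Finset.mem_union_left _ hr) he
  · intro h r hr he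
    rcases Finset.mem_union.1 hr with h1 | h1
    · exact h r h1 he
    · exact pin_constraint h1 Y he Z

lemma softStable_union_pin [Fintype P] (A : Program P) (X : Finset P) (N : ℕ)
    (Y : Finset P) : SoftStable (A ∪ pin X N) Y ↔ SoftStable A Y := by
  simp only [softStable_iff, cond_union_pin]

lemma hardCount_le_card (S : Program P) : hardCount S ≤ (S.card : ℤ) := by
  unfold hardCount
  exact_mod_cast Finset.card_filter_le _ _

lemma tendsto_exp_linear (b m : ℝ) (hm : m < 0) :
    Tendsto (fun a : ℝ => Real.exp (b + m * a)) atTop (nhds 0) := by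
  have h1 : Tendsto (fun a : ℝ => b + m * a) atTop atBot := by
    apply tendsto_atBot_add_const_left
    exact (tendsto_const_mul_atBot_of_neg hm).2 tendsto_id
  exact Real.tendsto_exp_atBot.comp h1

lemma Pr_eq_zero [Fintype P] {𝕂 : Program P} {X : Finset P}
    (hX : ¬ SoftStable 𝕂 X) : Pr 𝕂 X = 0 := by
  unfold Pr
  have : (fun a : ℝ => (W 𝕂 X).eval a / ∑ Y : Finset P, (W 𝕂 Y).eval a)
      = fun _ => (0 : ℝ) := by
    funext a
    rw [W, if_neg hX]
    simp [WExpr.eval]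
  rw [this]
  exact tendsto_const_nhds.limUnder_eq

lemma Pr_eq_one [Fintype P] {𝕂 : Program P} {X : Finset P}
    (hX : SoftStable 𝕂 X)
    (hmax : ∀ Y : Finset P, SoftStable 𝕂 Y → Y ≠ X →
      hardCount (progSat 𝕂 Y) < hardCount (progSat 𝕂 X)) :
    Pr 𝕂 X = 1 := by
  unfold Pr
  set c : ℝ := softSum (progSat 𝕂 X) with hc
  set k : ℤ := hardCount (progSat 𝕂 X) with hk
  have hWX : W 𝕂 X = .exp c k := by rw [W, if_pos hX]; rfl
  set u : ℝ → ℝ := fun a => Real.exp (c + k * a) with hu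
  have hupos : ∀ a, 0 < u a := fun a => Real.exp_pos _
  set g : ℝ → ℝ := fun a => ∑ Y ∈ Finset.univ.erase X, (W 𝕂 Y).eval a with hg
  have hsum : ∀ a : ℝ, (∑ Y : Finset P, (W 𝕂 Y).eval a) = g a + u a := by
    intro a
    rw [hg]
    rw [← Finset.sum_erase_add Finset.univ _ (Finset.mem_univ X)]
    congr 1
    rw [hWX]; rfl
  -- each other term over u tends to 0
  have hterm : ∀ Y ∈ Finset.univ.erase X,
      Tendsto (fun a => (W 𝕂 Y).eval a / u a) atTop (nhds 0) := by
    intro Y hY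
    have hYX : Y ≠ X := (Finset.mem_erase.1 hY).1
    by_cases hsY : SoftStable 𝕂 Y
    · have hlt : hardCount (progSat 𝕂 Y) < k := hmax Y hsY hYX
      have hWY : W 𝕂 Y = .exp (softSum (progSat 𝕂 Y)) (hardCount (progSat 𝕂 Y)) := by
        rw [W, if_pos hsY]; rfl
      set cY : ℝ := softSum (progSat 𝕂 Y)
      set kY : ℤ := hardCount (progSat 𝕂 Y)
      have heq : (fun a => (W 𝕂 Y).eval a / u a)
          = fun a => Real.exp ((cY - c) + ((kY : ℝ) - (k : ℝ)) * a) := by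
        funext a
        rw [hWY, hu]
        show Real.exp (cY + kY * a) / Real.exp (c + k * a) = _
        rw [← Real.exp_sub]
        ring_nf
      rw [heq]
      apply tendsto_exp_linear
      have : (kY : ℝ) < (k : ℝ) := by exact_mod_cast hlt
      linarith
    · have hWY : W 𝕂 Y = .zero := by rw [W, if_neg hsY]
      have heq : (fun a => (W 𝕂 Y).eval a / u a) = fun _ => (0 : ℝ) := by
        funext a; rw [hWY]; simp [WExpr.eval]
      rw [heq]
      exact tendsto_const_nhds
  have hgu : Tendsto (fun a => g a / u a) atTop (nhds 0) := by
    have : (fun a => g a / u a)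
        = fun a => ∑ Y ∈ Finset.univ.erase X, ((W 𝕂 Y).eval a / u a) := by
      funext a; rw [hg, Finset.sum_div]
    rw [this]
    have h0 : (0 : ℝ) = ∑ Y ∈ Finset.univ.erase X, (0 : ℝ) := by simp
    rw [h0]
    exact tendsto_finset_sum _ hterm
  have hf : (fun a : ℝ => (W 𝕂 X).eval a / ∑ Y : Finset P, (W 𝕂 Y).eval a)
      = fun a => 1 / (1 + g a / u a) := by
    funext a
    rw [hsum a, hWX]
    show u a / (g a + u a) = _
    have hne := ne_of_gt (hupos a)
    have h1 : 1 + g a / u a = (g a + u a) / u a := by field_simp; ring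
    rw [h1, one_div_div]
  rw [hf]
  have htend : Tendsto (fun a => 1 / (1 + g a / u a)) atTop (nhds 1) := by
    have h1 : Tendsto (fun a => 1 + g a / u a) atTop (nhds 1) := by
      have := hgu.const_add (1 : ℝ)
      simpa using this
    have := h1.inv₀ (by norm_num)
    simpa [one_div] using this
  exact htend.limUnder_eq

/-- The core equivalence used twice in the proof of `stmt4`. -/
lemma softStable_iff_pr_one [Fintype P] (A : Program P) (X : Finset P) (N : ℕ)
    (hN : A.card < N) :
    SoftStable A X ↔ Pr (A ∪ pin X N) X = 1 := by
  set U := pin X N with hU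
  constructor
  · intro hA
    have hX : SoftStable (A ∪ U) X := (softStable_union_pin A X N X).2 hA
    apply Pr_eq_one hX
    intro Y hsY hYX
    -- find a disagreement atom
    have hne : ∃ p, ¬ ((p ∈ X) ↔ (p ∈ Y)) := by
      by_contra hcon
      push_neg at hcon
      exact hYX (Finset.ext fun p => (hcon p).symm)
    obtain ⟨p, hp⟩ := hne
    have hnotsat : ∀ r ∈ pinP X p N, r.2.eval Y = false := by
      intro r hr
      simp only [pinP, Finset.mem_image, Finset.mem_range] at hr
      obtain ⟨j, -, hj⟩ := hr
      rw [← hj]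
      show (pad j (pinF X p)).eval Y = false
      rw [eval_pad, Bool.eq_false_iff]
      intro hcontra
      exact hp ((eval_pinF X p Y).1 hcontra)
    have hdisj : Disjoint (pinP X p N) (progSat (A ∪ U) Y) := by
      rw [Finset.disjoint_left]
      intro r hr1 hr2
      have h2 := (Finset.mem_filter.1 hr2).2
      rw [hnotsat r hr1] at h2
      exact absurd h2 (by simp)
    have hsub : pinP X p N ∪ progSat (A ∪ U) Y ⊆ A ∪ U :=
      Finset.union_subset ((pinP_subset_pin X p N).trans Finset.subset_union_right)
        (Finset.filter_subset _ _)
    have hcard1 : N + (progSat (A ∪ U) Y).card ≤ (A ∪ U).card := by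
      rw [← card_pinP X p N, ← Finset.card_union_of_disjoint hdisj]
      exact Finset.card_le_card hsub
    have hcard2 : (A ∪ U).card ≤ A.card + U.card := Finset.card_union_le _ _
    have hUsub : U ⊆ (progSat (A ∪ U) X).filter (fun r => r.1 = Weight.hard) := by
      intro r hr
      exact Finset.mem_filter.2 ⟨Finset.mem_filter.2
        ⟨Finset.mem_union_right _ hr, pin_eval_X hr⟩, (mem_pin hr).1⟩
    have hcard3 : U.card ≤ ((progSat (A ∪ U) X).filter (fun r => r.1 = Weight.hard)).card :=
      Finset.card_le_card hUsub
    have hcard4 : ((progSat (A ∪ U) Y).filter (fun r => r.1 = Weight.hard)).card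
        ≤ (progSat (A ∪ U) Y).card := Finset.card_filter_le _ _
    unfold hardCount
    exact_mod_cast (by omega :
      ((progSat (A ∪ U) Y).filter (fun r => r.1 = Weight.hard)).card
        < ((progSat (A ∪ U) X).filter (fun r => r.1 = Weight.hard)).card)
  · intro hPr
    by_contra hA
    have hX : ¬ SoftStable (A ∪ U) X := fun hc => hA ((softStable_union_pin A X N X).1 hc)
    rw [Pr_eq_zero hX] at hPr
    norm_num at hPr

end Stmt4Aux


/-- strong equivalence implies structural equivalence. -/
theorem stmt4 {P : Type} [DecidableEq P] [Fintype P] (𝔽 𝔾 : Program P)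
    (h : StrongEquiv 𝔽 𝔾) : StructEquiv 𝔽 𝔾 := by
  intro ℍ X
  set N := 𝔽.card + 𝔾.card + ℍ.card + (𝔽 ∪ ℍ).card + (𝔾 ∪ ℍ).card + 1 with hNdef
  have h1 : SoftStable (𝔽 ∪ ℍ) X ↔ Pr ((𝔽 ∪ ℍ) ∪ pin X N) X = 1 :=
    softStable_iff_pr_one _ X N (by omega)
  have h2 : SoftStable (𝔾 ∪ ℍ) X ↔ Pr ((𝔾 ∪ ℍ) ∪ pin X N) X = 1 :=
    softStable_iff_pr_one _ X N (by omega)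
  have hpr := h (ℍ ∪ pin X N) X
  rw [← Finset.union_assoc, ← Finset.union_assoc] at hpr
  rw [h1, h2, hpr]

end LPMLN
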